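/- Let A be a group generated by z elements and let B be a finite group generated by n elements. Then the Cartesian wreath product A Wr B is generated by z + n elements. -/

import Mathlib

/-- The shift automorphism of the base group `B → A` given by `b : B`:
it sends `f` to `fun x => f (x * b)`. -/
def wreathShift {A B : Type*} [Group A] [Group B] (b : B) : (B → A) ≃* (B → A) where
  toFun f := fun x => f (x * b)
  invFun f := fun x => f (x * b⁻¹)
  left_inv f := by funext x; simp [mul_assoc]
  right_inv f := by funext x; simp [mul_assoc]
  map_mul' f g := rfl

/-- The action of `B` on the base group `B → A` by translation of arguments:
`(b • f) x = f (x * b)`. -/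
def wreathAction (A B : Type*) [Group A] [Group B] : B →* MulAut (B → A) where
  toFun := wreathShift
  map_one' := by ext f x; simp [wreathShift]
  map_mul' b₁ b₂ := by ext f x; simp [wreathShift, mul_assoc]

/-- The Cartesian (complete) wreath product `A Wr B = (B → A) ⋊ B`. -/
abbrev Wr (A B : Type*) [Group A] [Group B] : Type _ :=
  (B → A) ⋊[wreathAction A B] B

/-- `w` is a law of the group `G`: every homomorphic substitution from the free
group of countable rank into `G` sends `w` to `1`. -/
def IsLaw (G : Type*) [Group G] (w : FreeGroup ℕ) : Prop :=
  ∀ φ : FreeGroup ℕ →* G, φ w = 1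

universe u u'

/-- If `A` is generated by `z` elements and `B` is a finite group generated by `n`
elements, then the Cartesian wreath product `A Wr B` is generated by `z + n` elements. -/
theorem wreath_generated_by_add
    (A : Type u) [Group A] (B : Type u') [Group B] [Finite B]
    (z n : ℕ)
    (hA : ∃ f : Fin z → A, Subgroup.closure (Set.range f) = ⊤)
    (hB : ∃ g : Fin n → B, Subgroup.closure (Set.range g) = ⊤) :
    ∃ h : Fin (z + n) → Wr A B, Subgroup.closure (Set.range h) = ⊤ := by
    classical
  obtain ⟨fA, hfA⟩ := hA
  obtain ⟨gB, hgB⟩ := hB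
  have : Fintype B := Fintype.ofFinite B
  set h : Fin (z + n) → Wr A B :=
    Fin.append (fun i => SemidirectProduct.inl (Pi.mulSingle 1 (fA i)))
      (fun j => SemidirectProduct.inr (gB j)) with hh
  refine ⟨h, ?_⟩
  rw [eq_top_iff]
  set S := Subgroup.closure (Set.range h) with hS
  -- inr b ∈ S for all b
  have hinr : ∀ b : B, (SemidirectProduct.inr b : Wr A B) ∈ S := by
    have hle : (SemidirectProduct.inr : B →* Wr A B).range ≤ S := by
      rw [MonoidHom.range_eq_map, ← hgB, MonoidHom.map_closure]
      apply Subgroup.closure_le _ |>.2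
      rintro _ ⟨_, ⟨j, rfl⟩, rfl⟩
      apply Subgroup.subset_closure
      exact ⟨Fin.natAdd z j, by simp [hh, Fin.append_right]⟩
    exact fun b => hle ⟨b, rfl⟩
  -- single-supported functions
  have hsingle : ∀ (b : B) (i : Fin z),
      (SemidirectProduct.inl (Pi.mulSingle b (fA i)) : Wr A B) ∈ S := by
    intro b i
    have h1 : (SemidirectProduct.inl (Pi.mulSingle 1 (fA i)) : Wr A B) ∈ S :=
      Subgroup.subset_closure ⟨Fin.castAdd n i, by simp [hh, Fin.append_left]⟩
    have key := SemidirectProduct.inl_aut (φ := wreathAction A B) b⁻¹ (Pi.mulSingle 1 (fA i))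
    rw [inv_inv] at key
    have heq : wreathAction A B b⁻¹ (Pi.mulSingle 1 (fA i)) = Pi.mulSingle b (fA i) := by
      funext x
      simp only [wreathAction, wreathShift, MonoidHom.coe_mk, OneHom.coe_mk,
        MulEquiv.coe_mk, Equiv.coe_fn_mk]
      by_cases hx : x = b
      · subst hx
        rw [mul_inv_cancel, Pi.mulSingle_eq_same, Pi.mulSingle_eq_same]
      · rw [Pi.mulSingle_eq_of_ne hx, Pi.mulSingle_eq_of_ne]
        intro hc
        exact hx (by rwa [mul_inv_eq_one] at hc)
    rw [heq] at key
    rw [key]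
    exact S.mul_mem (S.mul_mem (hinr b⁻¹) h1) (hinr b)
  -- all single-supported functions with arbitrary value
  have hsingle' : ∀ (b : B) (a : A),
      (SemidirectProduct.inl (Pi.mulSingle b a) : Wr A B) ∈ S := by
    intro b a
    have hle : (⊤ : Subgroup A) ≤ Subgroup.comap
        ((SemidirectProduct.inl : (B → A) →* Wr A B).comp (MonoidHom.mulSingle _ b)) S := by
      rw [← hfA]
      apply Subgroup.closure_le _ |>.2
      rintro _ ⟨i, rfl⟩
      exact hsingle b i
    exact hle trivial
  -- inl f ∈ S for all f
  have hinl : ∀ f : B → A, (SemidirectProduct.inl f : Wr A B) ∈ S := by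
    intro f
    have hf : f ∈ S.comap (SemidirectProduct.inl : (B → A) →* Wr A B) := by
      rw [← Finset.noncommProd_mulSingle f]
      exact Subgroup.noncommProd_mem _ _ fun b _ => hsingle' b (f b)
    exact hf
  intro x _
  rw [← SemidirectProduct.inl_left_mul_inr_right x]
  exact S.mul_mem (hinl x.left) (hinr x.right)
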